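/- Let κ be an infinite regular cardinal and I a proper ideal on κ containing every bounded subset of κ. Then there is no family ⟨X_α : α < κ⟩ of subsets of κ such that I⁺ = {Y ⊆ κ : X_α ∖ Y is bounded for some α < κ}. In other words, the collection I⁺ of I-positive sets is not generated modulo bounded sets by fewer than κ⁺ many sets. -/

import Mathlib

open Cardinal

/-- A subset of the ordinals below `κ` (realized as the type `κ.ord.ToType`)
is bounded if it is contained in a proper initial segment. -/
def Bdd {C : Type*} [Preorder C] (X : Set C) : Prop :=
  ∃ b : C, X ⊆ Set.Iio b

section Aux

variable {C : Type*} [LinearOrder C] [WellFoundedLT C]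

/-- Transfinite recursion scheme: `diagF g γ = g γ {diagF g δ | δ < γ}`. -/
noncomputable def diagF (g : C → Set C → C) : C → C :=
  (wellFounded_lt (α := C)).fix
    (fun γ ih => g γ (Set.range fun δ : Set.Iio γ => ih δ δ.2))

theorem diagF_eq (g : C → Set C → C) (γ : C) :
    diagF g γ = g γ (Set.range fun δ : Set.Iio γ => diagF g δ) :=
  WellFounded.fix_eq _ _ _

end Aux

theorem small_bdd (κ : Cardinal.{0}) (hκreg : κ.IsRegular) (S : Set κ.ord.ToType)
    (h : #S < κ) : Bdd S := by
  have h2 : ¬ IsCofinal S := fun hc =>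
    (Order.cof_le hc).not_gt (by rwa [Ordinal.cof_toType, hκreg.cof_ord])
  obtain ⟨b, hb⟩ := not_isCofinal_iff.1 h2
  exact ⟨b, fun x hx => hb x hx⟩

theorem bdd_small (κ : Cardinal.{0}) (S : Set κ.ord.ToType)
    (h : Bdd S) : #S < κ := by
  obtain ⟨b, hb⟩ := h
  exact (mk_le_mk_of_subset hb).trans_lt (Cardinal.mk_Iio_ord_toType b)

theorem statement4 (κ : Cardinal.{0}) (hκreg : κ.IsRegular)
    (I : Set (Set κ.ord.ToType))
    (hdown : ∀ X Y : Set κ.ord.ToType, X ⊆ Y → Y ∈ I → X ∈ I)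
    (hunion : ∀ X ∈ I, ∀ Y ∈ I, X ∪ Y ∈ I)
    (hproper : (Set.univ : Set κ.ord.ToType) ∉ I)
    (hbdd : ∀ X : Set κ.ord.ToType, Bdd X → X ∈ I) :
    ¬ ∃ X : κ.ord.ToType → Set κ.ord.ToType,
        {Y : Set κ.ord.ToType | Y ∉ I} = {Y : Set κ.ord.ToType | ∃ a, Bdd (X a \ Y)} := by
  rintro ⟨X, hX⟩
  have hne : Nonempty κ.ord.ToType := by
    rw [Ordinal.nonempty_toType_iff, ne_eq, Cardinal.ord_eq_zero]
    exact hκreg.pos.ne'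
  inhabit κ.ord.ToType
  -- each X a is positive, hence unbounded
  have hpos : ∀ a : κ.ord.ToType, X a ∉ I := by
    intro a
    have h1 : X a ∈ {Y : Set κ.ord.ToType | ∃ a, Bdd (X a \ Y)} :=
      ⟨a, default, by simp⟩
    rw [← hX] at h1
    exact h1
  have hub : ∀ a : κ.ord.ToType, ¬ Bdd (X a) := fun a h => hpos a (hbdd _ h)
  -- a bijection with the triple product
  have hcard : #(κ.ord.ToType × κ.ord.ToType × Bool) = #κ.ord.ToType := by
    have h : #κ.ord.ToType = κ := by rw [mk_toType, Cardinal.card_ord]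
    rw [Cardinal.mk_prod, Cardinal.mk_prod, Cardinal.lift_id, Cardinal.lift_id,
      Cardinal.lift_id, h, Cardinal.mk_bool]
    rw [Cardinal.mul_eq_left hκreg.aleph0_le
        (((Cardinal.nat_lt_aleph0 2).le.trans hκreg.aleph0_le).trans_eq' (by norm_num))
        two_ne_zero,
      Cardinal.mul_eq_self hκreg.aleph0_le]
  obtain ⟨e⟩ : Nonempty (κ.ord.ToType ≃ κ.ord.ToType × κ.ord.ToType × Bool) := by
    rw [← Cardinal.eq, hcard]
  classical
  -- the recursive choice function
  let g : κ.ord.ToType → Set κ.ord.ToType → κ.ord.ToType := fun γ S =>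
    if h : ∃ x, x ∈ X (e γ).1 ∧ ∀ y ∈ S, y < x then h.choose else default
  let F : κ.ord.ToType → κ.ord.ToType := diagF g
  have key : ∀ γ : κ.ord.ToType, F γ ∈ X (e γ).1 ∧ ∀ δ < γ, F δ < F γ := by
    intro γ
    have hS : Bdd (Set.range fun δ : Set.Iio γ => F δ) := by
      apply small_bdd κ hκreg
      exact (Cardinal.mk_range_le).trans_lt (Cardinal.mk_Iio_ord_toType γ)
    obtain ⟨b, hb⟩ := hS
    obtain ⟨x, hx1, hx2⟩ : ∃ x ∈ X (e γ).1, ¬ x < b := by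
      by_contra h
      push_neg at h
      exact hub (e γ).1 ⟨b, h⟩
    have hex : ∃ x, x ∈ X (e γ).1 ∧
        ∀ y ∈ (Set.range fun δ : Set.Iio γ => F δ), y < x :=
      ⟨x, hx1, fun y hy => lt_of_lt_of_le (hb hy) (not_lt.1 hx2)⟩
    have hFγ : F γ = hex.choose := by
      show diagF g γ = _
      rw [diagF_eq]
      exact dif_pos hex
    refine ⟨hFγ ▸ hex.choose_spec.1, fun δ hδ => ?_⟩
    rw [hFγ]
    exact hex.choose_spec.2 (F δ) ⟨⟨δ, hδ⟩, rfl⟩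
  have hsm : StrictMono F := fun δ γ h => (key γ).2 δ h
  -- the splitting set R
  let R : Set κ.ord.ToType := F '' {γ : κ.ord.ToType | (e γ).2.2 = true}
  -- fibers of e are unbounded
  have fiber_unbdd : ∀ (a : κ.ord.ToType) (t : Bool),
      ¬ Bdd {γ : κ.ord.ToType | (e γ).1 = a ∧ (e γ).2.2 = t} := by
    intro a t hB
    have hsub : Set.range (fun β : κ.ord.ToType => e.symm (a, β, t)) ⊆
        {γ : κ.ord.ToType | (e γ).1 = a ∧ (e γ).2.2 = t} := by
      rintro _ ⟨β, rfl⟩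
      simp
    have hinj : Function.Injective (fun β : κ.ord.ToType => e.symm (a, β, t)) := by
      intro β₁ β₂ h
      have h2 := e.symm.injective h
      exact (Prod.ext_iff.1 (Prod.ext_iff.1 h2).2).1
    have hκle : κ ≤ #{γ : κ.ord.ToType | (e γ).1 = a ∧ (e γ).2.2 = t} := by
      calc κ = #κ.ord.ToType := by rw [mk_toType, Cardinal.card_ord]
        _ = #(Set.range (fun β : κ.ord.ToType => e.symm (a, β, t))) :=
            (Cardinal.mk_range_eq _ hinj).symm
        _ ≤ _ := mk_le_mk_of_subset hsub
    exact hκle.not_gt (bdd_small κ _ hB)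
  -- X a ∩ R is unbounded
  have hIR : ∀ a : κ.ord.ToType, ¬ Bdd (X a ∩ R) := by
    rintro a ⟨b, hb⟩
    obtain ⟨γ, hγ, hγb⟩ :
        ∃ γ ∈ {γ : κ.ord.ToType | (e γ).1 = a ∧ (e γ).2.2 = true}, ¬ γ < b := by
      by_contra h
      push_neg at h
      exact fiber_unbdd a true ⟨b, h⟩
    have h1 : F γ ∈ X a := hγ.1 ▸ (key γ).1
    have h2 : F γ ∈ R := ⟨γ, hγ.2, rfl⟩
    have h3 : F γ < b := hb ⟨h1, h2⟩
    exact absurd ((not_lt.1 hγb).trans hsm.le_apply) (not_le.2 h3)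
  -- X a \ R is unbounded
  have hDR : ∀ a : κ.ord.ToType, ¬ Bdd (X a \ R) := by
    rintro a ⟨b, hb⟩
    obtain ⟨γ, hγ, hγb⟩ :
        ∃ γ ∈ {γ : κ.ord.ToType | (e γ).1 = a ∧ (e γ).2.2 = false}, ¬ γ < b := by
      by_contra h
      push_neg at h
      exact fiber_unbdd a false ⟨b, h⟩
    have h1 : F γ ∈ X a := hγ.1 ▸ (key γ).1
    have h2 : F γ ∉ R := by
      rintro ⟨δ, hδ, hδeq⟩
      have h4 : δ = γ := hsm.injective hδeq
      rw [h4] at hδ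
      simp [hγ.2] at hδ
    have h3 : F γ < b := hb ⟨h1, h2⟩
    exact absurd ((not_lt.1 hγb).trans hsm.le_apply) (not_le.2 h3)
  -- conclude
  by_cases hRc : Rᶜ ∈ I
  · have hR : R ∉ I := fun hRI =>
      hproper (hdown _ _ (by simp) (hunion R hRI Rᶜ hRc))
    have hmem : R ∈ {Y : Set κ.ord.ToType | ∃ a, Bdd (X a \ Y)} := by
      rw [← hX]; exact hR
    obtain ⟨a, ha⟩ := hmem
    exact hDR a ha
  · have hmem : Rᶜ ∈ {Y : Set κ.ord.ToType | ∃ a, Bdd (X a \ Y)} := by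
      rw [← hX]; exact hRc
    obtain ⟨a, ha⟩ := hmem
    rw [Set.diff_compl] at ha
    exact hIR a ha
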